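/- There is no kernel W : [0,1]² → [0,∞) such that t(F, W) = e^{−Δ_F} for every finite simple graph F, where Δ_F is the number of triangles of F. -/

import Mathlib

open MeasureTheory

/-- Lebesgue measure restricted to `[0,1]`. -/
noncomputable def μ01 : Measure ℝ := volume.restrict (Set.Icc 0 1)

/-- The homomorphism density `t(H, W) = ∫_{[0,1]^{V(H)}} ∏_{uv ∈ E(H)} W(x_u, x_v) ∏ dx_v`
of a finite graph `H` in a symmetric nonnegative kernel `W`. -/
noncomputable def kernelDensity {V : Type} [Fintype V] [DecidableEq V]
    (H : SimpleGraph V) [DecidableRel H.Adj] (W : ℝ → ℝ → ℝ)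
    (hsymm : ∀ x y, W x y = W y x) : ENNReal :=
  ∫⁻ x : V → ℝ, ∏ e ∈ H.edgeFinset,
      Sym2.lift ⟨fun u v => ENNReal.ofReal (W (x u) (x v)),
        fun u v => by show ENNReal.ofReal (W (x u) (x v)) = ENNReal.ofReal (W (x v) (x u)); rw [hsymm]⟩ e
    ∂(Measure.pi fun _ => μ01)

instance : IsProbabilityMeasure μ01 := by constructor; simp [μ01]

/-- The path on three vertices. -/
def P3 : SimpleGraph (Fin 3) where
  Adj a b := a.val + 1 = b.val ∨ b.val + 1 = a.val
  symm := by constructor; decide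
  loopless := by constructor; decide

/-- The 4-cycle. -/
def C4 : SimpleGraph (Fin 4) where
  Adj a b := a ≠ b ∧ (a = b + 1 ∨ b = a + 1)
  symm := by constructor; decide
  loopless := by constructor; decide

instance : DecidableRel P3.Adj := fun a b => by unfold P3; simp only; infer_instance
instance : DecidableRel C4.Adj := fun a b => by unfold C4; simp only; infer_instance

section Aux

variable {W : ℝ → ℝ → ℝ}

lemma measF (hmeas : Measurable (Function.uncurry W)) {n : ℕ} (i j : Fin n) :
    Measurable fun x : Fin n → ℝ => ENNReal.ofReal (W (x i) (x j)) := by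
  have h1 : Measurable fun x : Fin n → ℝ => (x i, x j) :=
    (measurable_pi_apply i).prodMk (measurable_pi_apply j)
  have h2 : Measurable fun x : Fin n → ℝ => W (x i) (x j) := hmeas.comp h1
  exact h2.ennreal_ofReal

lemma measF2 (hmeas : Measurable (Function.uncurry W)) :
    Measurable fun p : ℝ × ℝ => ENNReal.ofReal (W p.1 p.2) := by
  have : Measurable fun p : ℝ × ℝ => W p.1 p.2 := hmeas
  exact this.ennreal_ofReal

/-- The "cherry" kernel `g(x,y) = ∫ W(x,z) W(z,y) dz`. -/
noncomputable def gk (W : ℝ → ℝ → ℝ) (x y : ℝ) : ENNReal :=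
  ∫⁻ z, ENNReal.ofReal (W x z) * ENNReal.ofReal (W z y) ∂μ01

lemma measgk (hmeas : Measurable (Function.uncurry W)) :
    Measurable fun p : ℝ × ℝ => gk W p.1 p.2 := by
  have h : Measurable fun q : (ℝ × ℝ) × ℝ =>
      ENNReal.ofReal (W q.1.1 q.2) * ENNReal.ofReal (W q.2 q.1.2) := by
    have h1 : Measurable fun q : (ℝ × ℝ) × ℝ => W q.1.1 q.2 :=
      hmeas.comp ((measurable_fst.comp measurable_fst).prodMk measurable_snd)
    have h2 : Measurable fun q : (ℝ × ℝ) × ℝ => W q.2 q.1.2 :=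
      hmeas.comp (measurable_snd.prodMk (measurable_snd.comp measurable_fst))
    exact h1.ennreal_ofReal.mul h2.ennreal_ofReal
  exact h.lintegral_prod_right'

lemma gk_symm (hsymm : ∀ x y, W x y = W y x) (x y : ℝ) : gk W x y = gk W y x := by
  unfold gk
  refine lintegral_congr fun z => ?_
  rw [hsymm x z, hsymm z y, mul_comm]

lemma measFz (hmeas : Measurable (Function.uncurry W)) (x y : ℝ) :
    Measurable fun z : ℝ => ENNReal.ofReal (W x z) * ENNReal.ofReal (W z y) := by
  have h1 : Measurable fun z : ℝ => W x z := hmeas.comp (measurable_const.prodMk measurable_id)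
  have h2 : Measurable fun z : ℝ => W z y := hmeas.comp (measurable_id.prodMk measurable_const)
  exact h1.ennreal_ofReal.mul h2.ennreal_ofReal

/-- Density of `K₂`. -/
lemma densK2 (hsymm : ∀ x y, W x y = W y x) (hmeas : Measurable (Function.uncurry W)) :
    kernelDensity (⊤ : SimpleGraph (Fin 2)) W hsymm
    = ∫⁻ x, ∫⁻ y, ENNReal.ofReal (W x y) ∂μ01 ∂μ01 := by
  unfold kernelDensity
  have he : (⊤ : SimpleGraph (Fin 2)).edgeFinset = {s(0,1)} := by decide
  simp only [he, Finset.prod_singleton, Sym2.lift_mk]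
  rw [lintegral_eq_lmarginal_univ (fun _ => (0:ℝ))]
  have huniv : (Finset.univ : Finset (Fin 2)) = insert 0 {1} := by decide
  rw [huniv, lmarginal_insert _ (measF hmeas 0 1) (by decide)]
  simp only [lmarginal_singleton]
  simp [Function.update]

/-- Density of `P₃`. -/
lemma densP3 (hsymm : ∀ x y, W x y = W y x) (hmeas : Measurable (Function.uncurry W)) :
    kernelDensity P3 W hsymm
    = ∫⁻ x, ∫⁻ y, ∫⁻ z, ENNReal.ofReal (W x y) * ENNReal.ofReal (W y z) ∂μ01 ∂μ01 ∂μ01 := by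
  unfold kernelDensity
  have he : P3.edgeFinset = {s(0,1), s(1,2)} := by decide
  have hprod : ∀ x : Fin 3 → ℝ,
      (∏ e ∈ P3.edgeFinset, Sym2.lift ⟨fun u v => ENNReal.ofReal (W (x u) (x v)),
        fun u v => by show ENNReal.ofReal (W (x u) (x v)) = ENNReal.ofReal (W (x v) (x u)); rw [hsymm]⟩ e)
      = ENNReal.ofReal (W (x 0) (x 1)) * ENNReal.ofReal (W (x 1) (x 2)) := fun x => by
    rw [he, Finset.prod_insert (by decide), Finset.prod_singleton]; rfl
  simp only [hprod]
  have hm : Measurable fun x : Fin 3 → ℝ =>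
      ENNReal.ofReal (W (x 0) (x 1)) * ENNReal.ofReal (W (x 1) (x 2)) :=
    (measF hmeas 0 1).mul (measF hmeas 1 2)
  rw [lintegral_eq_lmarginal_univ (fun _ => (0:ℝ))]
  have huniv : (Finset.univ : Finset (Fin 3)) = insert 0 (insert 1 {2}) := by decide
  rw [huniv]
  simp only [lmarginal_insert _ hm (show (0:Fin 3) ∉ ({1,2} : Finset (Fin 3)) by decide),
    lmarginal_insert _ hm (show (1:Fin 3) ∉ ({2} : Finset (Fin 3)) by decide), lmarginal_singleton]
  simp [Function.update]

/-- Density of `K₃`. -/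
lemma densK3 (hsymm : ∀ x y, W x y = W y x) (hmeas : Measurable (Function.uncurry W)) :
    kernelDensity (⊤ : SimpleGraph (Fin 3)) W hsymm
    = ∫⁻ x, ∫⁻ y, ∫⁻ z, ENNReal.ofReal (W x y) *
        (ENNReal.ofReal (W x z) * ENNReal.ofReal (W y z)) ∂μ01 ∂μ01 ∂μ01 := by
  unfold kernelDensity
  have he : (⊤ : SimpleGraph (Fin 3)).edgeFinset = {s(0,1), s(0,2), s(1,2)} := by decide
  have hprod : ∀ x : Fin 3 → ℝ,
      (∏ e ∈ (⊤ : SimpleGraph (Fin 3)).edgeFinset,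
        Sym2.lift ⟨fun u v => ENNReal.ofReal (W (x u) (x v)),
        fun u v => by show ENNReal.ofReal (W (x u) (x v)) = ENNReal.ofReal (W (x v) (x u)); rw [hsymm]⟩ e)
      = ENNReal.ofReal (W (x 0) (x 1)) *
        (ENNReal.ofReal (W (x 0) (x 2)) * ENNReal.ofReal (W (x 1) (x 2))) := fun x => by
    rw [he, Finset.prod_insert (by decide), Finset.prod_insert (by decide),
      Finset.prod_singleton]; rfl
  simp only [hprod]
  have hm : Measurable fun x : Fin 3 → ℝ =>
      ENNReal.ofReal (W (x 0) (x 1)) *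
        (ENNReal.ofReal (W (x 0) (x 2)) * ENNReal.ofReal (W (x 1) (x 2))) :=
    (measF hmeas 0 1).mul ((measF hmeas 0 2).mul (measF hmeas 1 2))
  rw [lintegral_eq_lmarginal_univ (fun _ => (0:ℝ))]
  have huniv : (Finset.univ : Finset (Fin 3)) = insert 0 (insert 1 {2}) := by decide
  rw [huniv]
  simp only [lmarginal_insert _ hm (show (0:Fin 3) ∉ ({1,2} : Finset (Fin 3)) by decide),
    lmarginal_insert _ hm (show (1:Fin 3) ∉ ({2} : Finset (Fin 3)) by decide), lmarginal_singleton]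
  simp [Function.update]

/-- Density of `C₄`. -/
lemma densC4 (hsymm : ∀ x y, W x y = W y x) (hmeas : Measurable (Function.uncurry W)) :
    kernelDensity C4 W hsymm
    = ∫⁻ x0, ∫⁻ x1, ∫⁻ x2, ∫⁻ x3, ENNReal.ofReal (W x0 x1) *
        (ENNReal.ofReal (W x1 x2) * (ENNReal.ofReal (W x2 x3) * ENNReal.ofReal (W x0 x3)))
        ∂μ01 ∂μ01 ∂μ01 ∂μ01 := by
  unfold kernelDensity
  have he : C4.edgeFinset = {s(0,1), s(1,2), s(2,3), s(0,3)} := by decide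
  have hprod : ∀ x : Fin 4 → ℝ,
      (∏ e ∈ C4.edgeFinset, Sym2.lift ⟨fun u v => ENNReal.ofReal (W (x u) (x v)),
        fun u v => by show ENNReal.ofReal (W (x u) (x v)) = ENNReal.ofReal (W (x v) (x u)); rw [hsymm]⟩ e)
      = ENNReal.ofReal (W (x 0) (x 1)) * (ENNReal.ofReal (W (x 1) (x 2)) *
          (ENNReal.ofReal (W (x 2) (x 3)) * ENNReal.ofReal (W (x 0) (x 3)))) := fun x => by
    rw [he, Finset.prod_insert (by decide), Finset.prod_insert (by decide),
      Finset.prod_insert (by decide), Finset.prod_singleton]; rfl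
  simp only [hprod]
  have hm : Measurable fun x : Fin 4 → ℝ =>
      ENNReal.ofReal (W (x 0) (x 1)) * (ENNReal.ofReal (W (x 1) (x 2)) *
          (ENNReal.ofReal (W (x 2) (x 3)) * ENNReal.ofReal (W (x 0) (x 3)))) :=
    (measF hmeas 0 1).mul ((measF hmeas 1 2).mul ((measF hmeas 2 3).mul (measF hmeas 0 3)))
  rw [lintegral_eq_lmarginal_univ (fun _ => (0:ℝ))]
  have huniv : (Finset.univ : Finset (Fin 4)) = insert 0 (insert 1 (insert 2 {3})) := by decide
  rw [huniv]
  simp only [lmarginal_insert _ hm (show (0:Fin 4) ∉ ({1,2,3} : Finset (Fin 4)) by decide),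
    lmarginal_insert _ hm (show (1:Fin 4) ∉ ({2,3} : Finset (Fin 4)) by decide),
    lmarginal_insert _ hm (show (2:Fin 4) ∉ ({3} : Finset (Fin 4)) by decide), lmarginal_singleton]
  simp [Function.update]

lemma amgm (a : ENNReal) : 2 * a ≤ a * a + 1 := by
  rcases eq_or_ne a ⊤ with h | h
  · simp [h]
  · lift a to NNReal using h
    norm_cast
    rw [← NNReal.coe_le_coe]
    push_cast
    nlinarith [sq_nonneg ((a : ℝ) - 1)]

end Aux

/-- There is no kernel `W : [0,1]² → [0,∞)` whose `F`-density equals `e^{-Δ_F}` for every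
finite simple graph `F`, where `Δ_F` is the number of triangles of `F`. -/
theorem no_kernel_with_triangle_densities :
    ¬ ∃ (W : ℝ → ℝ → ℝ) (hsymm : ∀ x y, W x y = W y x),
      Measurable (Function.uncurry W) ∧ (∀ x y, 0 ≤ W x y) ∧
      ∀ (V : Type) [Fintype V] [DecidableEq V] (F : SimpleGraph V) [DecidableRel F.Adj],
        kernelDensity F W hsymm
          = ENNReal.ofReal (Real.exp (-((F.cliqueFinset 3).card : ℝ))) := by
  rintro ⟨W, hsymm, hmeas, hnn, hdens⟩
  set F : ℝ → ℝ → ENNReal := fun x y => ENNReal.ofReal (W x y) with hF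
  -- values of the densities
  have hP3 : kernelDensity P3 W hsymm = 1 := by
    rw [hdens]
    norm_num [show (P3.cliqueFinset 3).card = 0 by decide]
  have hC4 : kernelDensity C4 W hsymm = 1 := by
    rw [hdens]
    norm_num [show (C4.cliqueFinset 3).card = 0 by decide]
  have hK2 : kernelDensity (⊤ : SimpleGraph (Fin 2)) W hsymm = 1 := by
    rw [hdens]
    norm_num [show (((⊤ : SimpleGraph (Fin 2)).cliqueFinset 3)).card = 0 by decide]
  have hK3 : kernelDensity (⊤ : SimpleGraph (Fin 3)) W hsymm
      = ENNReal.ofReal (Real.exp (-1)) := by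
    rw [hdens]
    norm_num [show (((⊤ : SimpleGraph (Fin 3)).cliqueFinset 3)).card = 1 by decide]
  -- auxiliary measurability
  have mg : Measurable fun p : ℝ × ℝ => gk W p.1 p.2 := measgk hmeas
  have mF2 : Measurable fun p : ℝ × ℝ => ENNReal.ofReal (W p.1 p.2) := measF2 hmeas
  set ν : Measure (ℝ × ℝ) := μ01.prod μ01 with hν
  have hswapmeas : ∀ x : ℝ, AEMeasurable
      (fun q : ℝ × ℝ => ENNReal.ofReal (W x q.2) * ENNReal.ofReal (W q.2 q.1)) ν := by
    intro x
    have h1 : Measurable fun q : ℝ × ℝ => W x q.2 :=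
      hmeas.comp (measurable_const.prodMk measurable_snd)
    have h2 : Measurable fun q : ℝ × ℝ => W q.2 q.1 :=
      hmeas.comp (measurable_snd.prodMk measurable_fst)
    exact (h1.ennreal_ofReal.mul h2.ennreal_ofReal).aemeasurable
  -- ∫∫ g = 1
  have hI1 : ∫⁻ p, gk W p.1 p.2 ∂ν = 1 := by
    rw [lintegral_prod _ mg.aemeasurable]
    rw [densP3 hsymm hmeas] at hP3
    rw [← hP3]
    refine lintegral_congr fun x => ?_
    simp only [gk]
    exact lintegral_lintegral_swap (hswapmeas x)
  -- ∫∫ g² = 1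
  have hI2 : ∫⁻ p, gk W p.1 p.2 * gk W p.1 p.2 ∂ν = 1 := by
    rw [lintegral_prod (fun p : ℝ × ℝ => gk W p.1 p.2 * gk W p.1 p.2) (mg.mul mg).aemeasurable]
    rw [densC4 hsymm hmeas] at hC4
    rw [← hC4]
    refine lintegral_congr fun x0 => ?_
    have step1 : ∀ x1 x2 : ℝ,
        (∫⁻ x3, ENNReal.ofReal (W x0 x1) * (ENNReal.ofReal (W x1 x2) *
          (ENNReal.ofReal (W x2 x3) * ENNReal.ofReal (W x0 x3))) ∂μ01)
        = (ENNReal.ofReal (W x0 x1) * ENNReal.ofReal (W x1 x2)) * gk W x2 x0 := by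
      intro x1 x2
      rw [show (fun x3 => ENNReal.ofReal (W x0 x1) * (ENNReal.ofReal (W x1 x2) *
          (ENNReal.ofReal (W x2 x3) * ENNReal.ofReal (W x0 x3))))
        = fun x3 => (ENNReal.ofReal (W x0 x1) * ENNReal.ofReal (W x1 x2)) *
          (ENNReal.ofReal (W x2 x3) * ENNReal.ofReal (W x3 x0)) from
        funext fun x3 => by rw [hsymm x0 x3, mul_assoc]]
      rw [lintegral_const_mul _ (measFz hmeas x2 x0)]
      rfl
    simp only [step1]
    have hsw : AEMeasurable (fun q : ℝ × ℝ =>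
        (ENNReal.ofReal (W x0 q.1) * ENNReal.ofReal (W q.1 q.2)) * gk W q.2 x0) ν := by
      have h1 : Measurable fun q : ℝ × ℝ => W x0 q.1 :=
        hmeas.comp (measurable_const.prodMk measurable_fst)
      have h2 : Measurable fun q : ℝ × ℝ => W q.1 q.2 := hmeas
      have h3 : Measurable fun q : ℝ × ℝ => gk W q.2 x0 :=
        mg.comp (measurable_snd.prodMk measurable_const)
      exact ((h1.ennreal_ofReal.mul h2.ennreal_ofReal).mul h3).aemeasurable
    rw [lintegral_lintegral_swap hsw]
    refine lintegral_congr fun x2 => ?_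
    rw [show (fun x1 => (ENNReal.ofReal (W x0 x1) * ENNReal.ofReal (W x1 x2)) * gk W x2 x0)
      = fun x1 => gk W x2 x0 * (ENNReal.ofReal (W x0 x1) * ENNReal.ofReal (W x1 x2)) from
      funext fun x1 => mul_comm _ _]
    rw [lintegral_const_mul _ (measFz hmeas x0 x2)]
    rw [show (∫⁻ x1, ENNReal.ofReal (W x0 x1) * ENNReal.ofReal (W x1 x2) ∂μ01) = gk W x0 x2 from rfl]
    rw [gk_symm hsymm x2 x0, mul_comm]
  -- ∫∫ F = 1
  have hK2' : ∫⁻ p, ENNReal.ofReal (W p.1 p.2) ∂ν = 1 := by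
    rw [lintegral_prod _ mF2.aemeasurable]
    rw [densK2 hsymm hmeas] at hK2
    exact hK2
  -- ∫∫ F·g = e⁻¹
  have hK3' : ∫⁻ p, ENNReal.ofReal (W p.1 p.2) * gk W p.1 p.2 ∂ν
      = ENNReal.ofReal (Real.exp (-1)) := by
    rw [lintegral_prod (fun p : ℝ × ℝ => ENNReal.ofReal (W p.1 p.2) * gk W p.1 p.2) (mF2.mul mg).aemeasurable]
    rw [densK3 hsymm hmeas] at hK3
    rw [← hK3]
    refine lintegral_congr fun x => lintegral_congr fun y => ?_
    rw [show (fun z => ENNReal.ofReal (W x y) * (ENNReal.ofReal (W x z) * ENNReal.ofReal (W y z)))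
      = fun z => ENNReal.ofReal (W x y) * (ENNReal.ofReal (W x z) * ENNReal.ofReal (W z y)) from
      funext fun z => by rw [hsymm y z]]
    rw [lintegral_const_mul _ (measFz hmeas x y)]
    rfl
  -- from ∫ g = ∫ g² = 1 over a probability measure, conclude g = 1 a.e.
  have hGfin : ∀ᵐ p ∂ν, gk W p.1 p.2 ≠ ⊤ := by
    filter_upwards [ae_lt_top mg (by rw [hI1]; exact ENNReal.one_ne_top)] with p h
    exact h.ne
  have h2G : ∫⁻ p, 2 * gk W p.1 p.2 ∂ν = 2 := by
    rw [lintegral_const_mul _ mg, hI1, mul_one]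
  have hsq : ∫⁻ p, (gk W p.1 p.2 * gk W p.1 p.2 + 1) ∂ν = 2 := by
    rw [lintegral_add_right _ measurable_const, hI2, lintegral_one, measure_univ]
    norm_num
  have hae : (fun p => 2 * gk W p.1 p.2) =ᵐ[ν] fun p => gk W p.1 p.2 * gk W p.1 p.2 + 1 := by
    refine ae_eq_of_ae_le_of_lintegral_le (Filter.Eventually.of_forall fun p => amgm _)
      (by rw [h2G]; norm_num) ((mg.mul mg).add measurable_const).aemeasurable ?_
    rw [h2G, hsq]
  have hone : ∀ᵐ p ∂ν, gk W p.1 p.2 = 1 := by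
    filter_upwards [hae, hGfin] with p h hfin
    have hmt : gk W p.1 p.2 * gk W p.1 p.2 ≠ ⊤ := ENNReal.mul_ne_top hfin hfin
    have ht : 2 * (gk W p.1 p.2).toReal
        = (gk W p.1 p.2).toReal * (gk W p.1 p.2).toReal + 1 := by
      have := congrArg ENNReal.toReal h
      rwa [ENNReal.toReal_mul, ENNReal.toReal_add hmt ENNReal.one_ne_top,
        ENNReal.toReal_mul, ENNReal.toReal_ofNat, ENNReal.toReal_one] at this
    have : (gk W p.1 p.2).toReal = 1 := by nlinarith
    exact (ENNReal.toReal_eq_one_iff _).mp this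
  have hfinal : ∫⁻ p, ENNReal.ofReal (W p.1 p.2) * gk W p.1 p.2 ∂ν
      = ∫⁻ p, ENNReal.ofReal (W p.1 p.2) ∂ν := by
    refine lintegral_congr_ae ?_
    filter_upwards [hone] with p h
    rw [h, mul_one]
  rw [hK3', hK2'] at hfinal
  have h1 : Real.exp (-1) = 1 := ENNReal.ofReal_eq_one.mp hfinal
  have h2 : Real.exp (-1) < 1 := Real.exp_lt_one_iff.mpr (by norm_num)
  linarith
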